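/- Let P be a finite poset with legs a, b (two incomparable elements each strictly smaller than every element of P ∖ {a, b}), such that P ∖ {a, b} is nonempty and P has no maximum element (no element of P is larger than all other elements of P). Then for every n ∈ ℕ, sat*(n, P) ≥ min{2^n, n + 2}. -/

import Mathlib

open Finset

/-- A family of finite sets contains an induced copy of the poset `P`. -/
def ContainsIndCopy (P : Type*) [PartialOrder P] (F : Finset (Finset ℕ)) : Prop :=
  ∃ f : P → Finset ℕ, Function.Injective f ∧ (∀ p, f p ∈ F) ∧
    ∀ p q : P, p ≤ q ↔ f p ⊆ f q

/-- `F ⊆ 2^[n]` is induced `P`-saturated. -/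
def IsIndPSaturated (n : ℕ) (P : Type*) [PartialOrder P] (F : Finset (Finset ℕ)) : Prop :=
  (∀ A ∈ F, A ⊆ Finset.Icc 1 n) ∧
  ¬ ContainsIndCopy P F ∧
  ∀ G ⊆ Finset.Icc 1 n, G ∉ F → ContainsIndCopy P (insert G F)

/-- `sat*(n, P)`: minimum size of an induced `P`-saturated family in `2^[n]`. -/
noncomputable def satStarP (n : ℕ) (P : Type*) [PartialOrder P] : ℕ :=
  sInf {m | ∃ F : Finset (Finset ℕ), IsIndPSaturated n P F ∧ F.card = m}

/-- `a` and `b` are legs of `P`: incomparable, and each strictly smaller than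
every element of `P \ {a, b}`. -/
def IsLegs (P : Type*) [PartialOrder P] (a b : P) : Prop :=
  ¬ a ≤ b ∧ ¬ b ≤ a ∧ ∀ c : P, c ≠ a → c ≠ b → a < c ∧ b < c

/-- `C ∈ F` is a partner of `x`: `{x}` and `C` form the legs of some induced
copy of `P` in `F ∪ {{x}}`. -/
def IsPartner (P : Type*) [PartialOrder P] (a b : P) (F : Finset (Finset ℕ))
    (x : ℕ) (C : Finset ℕ) : Prop :=
  C ∈ F ∧ ∃ f : P → Finset ℕ, Function.Injective f ∧
    (∀ p, f p ∈ insert ({x} : Finset ℕ) F) ∧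
    (∀ p q : P, p ≤ q ↔ f p ⊆ f q) ∧
    ({f a, f b} : Set (Finset ℕ)) = {({x} : Finset ℕ), C}

section Aux

open scoped Classical

variable {P : Type*} [PartialOrder P]

private lemma inj_of_iff {f : P → Finset ℕ} (hiff : ∀ p q : P, p ≤ q ↔ f p ⊆ f q) :
    Function.Injective f := fun p q h =>
  le_antisymm ((hiff p q).mpr (by rw [h])) ((hiff q p).mpr (by rw [h]))

private lemma legs_symm {a b : P} (h : IsLegs P a b) : IsLegs P b a :=
  ⟨h.2.1, h.1, fun c hcb hca => ⟨(h.2.2 c hca hcb).2, (h.2.2 c hca hcb).1⟩⟩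

private lemma legs_ne {a b : P} (h : IsLegs P a b) : a ≠ b :=
  fun hab => h.1 (hab ▸ le_refl a)

/-- Relegging: replace the two leg images of an induced-copy-shaped map by any
incomparable pair sitting strictly below all body images. -/
private lemma releg {l₁ l₂ : P} (hl : IsLegs P l₁ l₂) {f : P → Finset ℕ}
    (hiff : ∀ p q : P, p ≤ q ↔ f p ⊆ f q) {R R' : Finset ℕ}
    (h1 : ¬ R ⊆ R') (h2 : ¬ R' ⊆ R)
    (hR : ∀ c, c ≠ l₁ → c ≠ l₂ → R ⊂ f c) (hR' : ∀ c, c ≠ l₁ → c ≠ l₂ → R' ⊂ f c) :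
    ∃ g : P → Finset ℕ, (∀ p q : P, p ≤ q ↔ g p ⊆ g q) ∧ g l₁ = R ∧ g l₂ = R' ∧
      ∀ c, c ≠ l₁ → c ≠ l₂ → g c = f c := by
  obtain ⟨hab, hba, hlegs⟩ := hl
  have hne : l₁ ≠ l₂ := fun h => hab (h ▸ le_refl _)
  set g : P → Finset ℕ := fun p => if p = l₁ then R else if p = l₂ then R' else f p with hgdef
  have hg1 : g l₁ = R := by simp [hgdef]
  have hg2 : g l₂ = R' := by simp [hgdef, hne.symm]
  have hgb : ∀ c, c ≠ l₁ → c ≠ l₂ → g c = f c := by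
    intro c hc1 hc2; simp [hgdef, hc1, hc2]
  refine ⟨g, ?_, hg1, hg2, hgb⟩
  intro p q
  rcases eq_or_ne p l₁ with hp1 | hp1
  · rw [hp1, hg1]
    rcases eq_or_ne q l₁ with hq1 | hq1
    · rw [hq1, hg1]; simp
    · rcases eq_or_ne q l₂ with hq2 | hq2
      · rw [hq2, hg2]; exact iff_of_false hab h1
      · rw [hgb q hq1 hq2]
        exact iff_of_true (hlegs q hq1 hq2).1.le (Finset.ssubset_def.mp (hR q hq1 hq2)).1
  · rcases eq_or_ne p l₂ with hp2 | hp2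
    · rw [hp2, hg2]
      rcases eq_or_ne q l₁ with hq1 | hq1
      · rw [hq1, hg1]; exact iff_of_false hba h2
      · rcases eq_or_ne q l₂ with hq2 | hq2
        · rw [hq2, hg2]; simp
        · rw [hgb q hq1 hq2]
          exact iff_of_true (hlegs q hq1 hq2).2.le (Finset.ssubset_def.mp (hR' q hq1 hq2)).1
    · rw [hgb p hp1 hp2]
      rcases eq_or_ne q l₁ with hq1 | hq1
      · rw [hq1, hg1]
        exact iff_of_false (not_le_of_gt (hlegs p hp1 hp2).1) (Finset.ssubset_def.mp (hR p hp1 hp2)).2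
      · rcases eq_or_ne q l₂ with hq2 | hq2
        · rw [hq2, hg2]
          exact iff_of_false (not_le_of_gt (hlegs p hp1 hp2).2) (Finset.ssubset_def.mp (hR' p hp1 hp2)).2
        · rw [hgb q hq1 hq2]; exact hiff p q

end Aux
section Sat

open scoped Classical

variable {P : Type*} [PartialOrder P] {n : ℕ} {a b : P} {F : Finset (Finset ℕ)}

/-- From a copy in `insert G F` where `F` is copy-free, extract the copy and the slot. -/
private lemma slot_of_insert {G : Finset ℕ} (hfree : ¬ ContainsIndCopy P F)
    (h : ContainsIndCopy P (insert G F)) :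
    ∃ f : P → Finset ℕ, (∀ p q : P, p ≤ q ↔ f p ⊆ f q) ∧
      ∃ p₀ : P, f p₀ = G ∧ ∀ p : P, p ≠ p₀ → f p ∈ F := by
  obtain ⟨f, hinj, hmem, hiff⟩ := h
  by_cases hG : ∃ p₀, f p₀ = G
  · obtain ⟨p₀, hp₀⟩ := hG
    refine ⟨f, hiff, p₀, hp₀, fun p hp => ?_⟩
    rcases Finset.mem_insert.mp (hmem p) with h | h
    · exact absurd (hinj (h.trans hp₀.symm)) hp
    · exact h
  · push_neg at hG
    exact absurd ⟨f, hinj, fun p => (Finset.mem_insert.mp (hmem p)).resolve_left (hG p), hiff⟩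
      hfree

private lemma empty_mem_of_sat (hlegs : IsLegs P a b) (hsat : IsIndPSaturated n P F) :
    (∅ : Finset ℕ) ∈ F := by
  by_contra hem
  obtain ⟨f, hiff, p₀, hp₀, _⟩ :=
    slot_of_insert hsat.2.1 (hsat.2.2 ∅ (Finset.empty_subset _) hem)
  have hle : ∀ q : P, p₀ ≤ q := fun q => (hiff p₀ q).mpr (by rw [hp₀]; exact Finset.empty_subset _)
  by_cases hpa : p₀ = a
  · exact hlegs.1 (hpa ▸ hle b)
  · by_cases hpb : p₀ = b
    · exact hlegs.2.1 (hpb ▸ hle a)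
    · exact absurd (lt_of_lt_of_le (hlegs.2.2 p₀ hpa hpb).1 (hle a)) (lt_irrefl a)

private lemma icc_mem_of_sat (hnomax : ¬ ∃ m : P, ∀ p : P, p ≠ m → p < m)
    (hsat : IsIndPSaturated n P F) : Finset.Icc 1 n ∈ F := by
  by_contra hic
  obtain ⟨f, hiff, p₀, hp₀, hrest⟩ :=
    slot_of_insert hsat.2.1 (hsat.2.2 _ (Finset.Subset.refl _) hic)
  have hle : ∀ q : P, q ≤ p₀ := by
    intro q
    refine (hiff q p₀).mpr ?_
    rw [hp₀]
    by_cases hq : q = p₀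
    · rw [hq, hp₀]
    · exact hsat.1 _ (hrest q hq)
  exact hnomax ⟨p₀, fun p hp => lt_of_le_of_ne (hle p) hp⟩

/-- There are two incomparable non-leg elements. -/
private lemma body_pair (hlegs : IsLegs P a b) [Fintype P]
    (hbody : ∃ c : P, c ≠ a ∧ c ≠ b)
    (hnomax : ¬ ∃ m : P, ∀ p : P, p ≠ m → p < m) :
    ∃ c₁ c₂ : P, (c₁ ≠ a ∧ c₁ ≠ b) ∧ (c₂ ≠ a ∧ c₂ ≠ b) ∧ ¬ c₁ ≤ c₂ ∧ ¬ c₂ ≤ c₁ := by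
  obtain ⟨c₀, hc₀a, hc₀b⟩ := hbody
  obtain ⟨m, hm_mem, hm_max⟩ := Finset.exists_maximal
    (s := Finset.univ.filter (fun q => c₀ ≤ q)) ⟨c₀, by simp⟩
  have hc₀m : c₀ ≤ m := (Finset.mem_filter.mp hm_mem).2
  have hmax : ∀ q : P, ¬ m < q := by
    intro q hq
    exact hq.not_ge (hm_max (Finset.mem_filter.mpr ⟨Finset.mem_univ q, hc₀m.trans hq.le⟩) hq.le)
  have ham : a < m := lt_of_lt_of_le (hlegs.2.2 c₀ hc₀a hc₀b).1 hc₀m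
  have hbm : b < m := lt_of_lt_of_le (hlegs.2.2 c₀ hc₀a hc₀b).2 hc₀m
  push_neg at hnomax
  obtain ⟨p, hpm, hplt⟩ := hnomax m
  have hmp : ¬ m ≤ p := fun h => hmax p (lt_of_le_of_ne h (Ne.symm hpm))
  have hpm' : ¬ p ≤ m := fun h => hplt (lt_of_le_of_ne h hpm)
  have hpa : p ≠ a := fun h => hpm' (h ▸ ham.le)
  have hpb : p ≠ b := fun h => hpm' (h ▸ hbm.le)
  exact ⟨m, p, ⟨ham.ne', hbm.ne'⟩, ⟨hpa, hpb⟩, hmp, hpm'⟩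

/-- A good partner of `x`: the data of a copy of `P` in `F ∪ {{x}}` with legs `{x}` and `C`. -/
private def GoodP (P : Type*) [PartialOrder P] (F : Finset (Finset ℕ)) (x : ℕ)
    (C : Finset ℕ) : Prop :=
  C ∈ F ∧ x ∉ C ∧ ∃ l₁ l₂ : P, IsLegs P l₁ l₂ ∧ ∃ f : P → Finset ℕ,
    (∀ p q : P, p ≤ q ↔ f p ⊆ f q) ∧ f l₁ = {x} ∧ f l₂ = C ∧
    ∀ c : P, c ≠ l₁ → c ≠ l₂ → f c ∈ F

private lemma partner_exists (hlegs : IsLegs P a b) (hsat : IsIndPSaturated n P F)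
    {x : ℕ} (hx : x ∈ Finset.Icc 1 n) (hxF : {x} ∉ F) :
    ∃ C, GoodP P F x C := by
  obtain ⟨f, hiff, p₀, hp₀, hrest⟩ := slot_of_insert hsat.2.1
    (hsat.2.2 {x} (by simpa using hx) hxF)
  have hinj : Function.Injective f := inj_of_iff hiff
  have hab : a ≠ b := legs_ne hlegs
  -- the slot must be a leg
  have hpab : p₀ = a ∨ p₀ = b := by
    by_contra hcon
    push_neg at hcon
    have h1 : f a ⊆ {x} := by
      rw [← hp₀]; exact (hiff a p₀).mp (hlegs.2.2 p₀ hcon.1 hcon.2).1.le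
    have h2 : f b ⊆ {x} := by
      rw [← hp₀]; exact (hiff b p₀).mp (hlegs.2.2 p₀ hcon.1 hcon.2).2.le
    have hfa : f a = ∅ := by
      rcases Finset.subset_singleton_iff.mp h1 with h | h
      · exact h
      · exact absurd (hinj (h.trans hp₀.symm)) (ne_of_lt (hlegs.2.2 p₀ hcon.1 hcon.2).1)
    have hfb : f b = ∅ := by
      rcases Finset.subset_singleton_iff.mp h2 with h | h
      · exact h
      · exact absurd (hinj (h.trans hp₀.symm)) (ne_of_lt (hlegs.2.2 p₀ hcon.1 hcon.2).2)
    exact hab (hinj (hfa.trans hfb.symm))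
  -- orient the legs
  obtain ⟨l₁, l₂, hl, hp₁⟩ : ∃ l₁ l₂ : P, IsLegs P l₁ l₂ ∧ p₀ = l₁ := by
    rcases hpab with h | h
    · exact ⟨a, b, hlegs, h⟩
    · exact ⟨b, a, legs_symm hlegs, h⟩
  have hne12 : l₁ ≠ l₂ := legs_ne hl
  have hCF : f l₂ ∈ F := hrest l₂ (fun h => hne12 ((h.trans hp₁).symm))
  refine ⟨f l₂, hCF, ?_, l₁, l₂, hl, f, hiff, hp₁ ▸ hp₀, rfl, ?_⟩
  · intro hxC
    have hfl₁ : f l₁ = {x} := hp₁ ▸ hp₀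
    exact hl.1 ((hiff l₁ l₂).mpr (by rw [hfl₁]; exact Finset.singleton_subset_iff.mpr hxC))
  · intro c hc1 hc2
    exact hrest c (fun h => hc1 (h.trans hp₁))

end Sat
section Edge

open scoped Classical

variable {P : Type*} [PartialOrder P] {n : ℕ} {a b : P} {F : Finset (Finset ℕ)}

private lemma fssub_trans {A B C : Finset ℕ} (h1 : A ⊂ B) (h2 : B ⊆ C) : A ⊂ C := by
  rcases Finset.ssubset_def.mp h1 with ⟨hs, hns⟩
  exact Finset.ssubset_def.mpr ⟨hs.trans h2, fun hc => hns (h2.trans hc)⟩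

private lemma fsub_ssub_trans {A B C : Finset ℕ} (h1 : A ⊆ B) (h2 : B ⊂ C) : A ⊂ C := by
  rcases Finset.ssubset_def.mp h2 with ⟨hs, hns⟩
  exact Finset.ssubset_def.mpr ⟨h1.trans hs, fun hc => hns (hc.trans h1)⟩

/-- The key lemma: every direction has a cube edge inside a saturated family. -/
private lemma edge_of_sat (hlegs : IsLegs P a b) (hsat : IsIndPSaturated n P F)
    {x : ℕ} (hx : x ∈ Finset.Icc 1 n) :
    ∃ A ∈ F, x ∉ A ∧ insert x A ∈ F := by
  by_cases hxF : ({x} : Finset ℕ) ∈ F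
  · exact ⟨∅, empty_mem_of_sat hlegs hsat, Finset.notMem_empty x, by simpa using hxF⟩
  · have hPne : (F.filter (fun C => GoodP P F x C)).Nonempty := by
      obtain ⟨C, hC⟩ := partner_exists hlegs hsat hx hxF
      exact ⟨C, Finset.mem_filter.mpr ⟨hC.1, hC⟩⟩
    obtain ⟨C, hCmem, hCmax⟩ := Finset.exists_max_image _ Finset.card hPne
    obtain ⟨hCF, hxC, l₁, l₂, hlf, f, hifff, hf1, hf2, hfbody⟩ :=
      (Finset.mem_filter.mp hCmem).2
    refine ⟨C, hCF, hxC, ?_⟩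
    by_contra hW
    set W : Finset ℕ := insert x C with hWdef
    have hWsub : W ⊆ Finset.Icc 1 n := Finset.insert_subset hx (hsat.1 C hCF)
    obtain ⟨g, hiffg, p₁, hgp₁, hgrest⟩ := slot_of_insert hsat.2.1 (hsat.2.2 W hWsub hW)
    have hinjg : Function.Injective g := inj_of_iff hiffg
    have hCx : ¬ C ⊆ {x} := by
      intro h
      exact hlf.2.1 ((hifff l₂ l₁).mpr (by rw [hf1, hf2]; exact h))
    have hCW : C ⊆ W := Finset.subset_insert x C
    have hfb : ∀ c : P, c ≠ l₁ → c ≠ l₂ → W ⊂ f c := by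
      intro c hc1 hc2
      have h1 : ({x} : Finset ℕ) ⊆ f c := by
        rw [← hf1]; exact (hifff l₁ c).mp (hlf.2.2 c hc1 hc2).1.le
      have h2 : C ⊆ f c := by
        rw [← hf2]; exact (hifff l₂ c).mp (hlf.2.2 c hc1 hc2).2.le
      have hsub : W ⊆ f c := Finset.insert_subset (Finset.singleton_subset_iff.mp h1) h2
      refine Finset.ssubset_iff_subset_ne.mpr ⟨hsub, fun hcon => hW ?_⟩
      rw [hcon]; exact hfbody c hc1 hc2
    by_cases hp₁ab : p₁ = a ∨ p₁ = b
    · -- the slot is a leg of the new copy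
      obtain ⟨m₁, m₂, hm, hp₁m⟩ : ∃ m₁ m₂ : P, IsLegs P m₁ m₂ ∧ p₁ = m₁ := by
        rcases hp₁ab with h | h
        · exact ⟨a, b, hlegs, h⟩
        · exact ⟨b, a, legs_symm hlegs, h⟩
      have hgm₁ : g m₁ = W := hp₁m ▸ hgp₁
      have hm12 : m₁ ≠ m₂ := legs_ne hm
      have hC₁F : g m₂ ∈ F := hgrest m₂ (fun h => hm12 ((h.trans hp₁m).symm))
      set C₁ : Finset ℕ := g m₂ with hC₁def
      have hWC₁ : ¬ W ⊆ C₁ := fun h => hm.1 ((hiffg m₁ m₂).mpr (by rw [hgm₁]; exact h))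
      have hC₁W : ¬ C₁ ⊆ W := fun h => hm.2.1 ((hiffg m₂ m₁).mpr (by rw [hgm₁]; exact h))
      have hgb : ∀ c : P, c ≠ m₁ → c ≠ m₂ → (W ⊂ g c ∧ C₁ ⊂ g c ∧ g c ∈ F) := by
        intro c hc1 hc2
        have h1 : W ⊆ g c := by rw [← hgm₁]; exact (hiffg m₁ c).mp (hm.2.2 c hc1 hc2).1.le
        have hne1 : W ≠ g c := by
          rw [← hgm₁]; exact fun h => (ne_of_lt (hm.2.2 c hc1 hc2).1) (hinjg h)
        have h2 : C₁ ⊆ g c := (hiffg m₂ c).mp (hm.2.2 c hc1 hc2).2.le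
        have hne2 : C₁ ≠ g c := fun h => (ne_of_lt (hm.2.2 c hc1 hc2).2) (hinjg h)
        exact ⟨Finset.ssubset_iff_subset_ne.mpr ⟨h1, hne1⟩,
          Finset.ssubset_iff_subset_ne.mpr ⟨h2, hne2⟩,
          hgrest c (fun h => hc1 (h.trans hp₁m))⟩
      by_cases h1 : C₁ ⊆ C
      · exact hC₁W (h1.trans hCW)
      by_cases h2 : C ⊆ C₁
      · -- C ⊂ C₁ and C₁ is a partner: contradicts maximality of C
        have hxC₁ : x ∉ C₁ := fun hx' => hWC₁ (Finset.insert_subset hx' h2)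
        have hC₁x : ¬ C₁ ⊆ {x} := fun h => hCx (h2.trans h)
        obtain ⟨g', hiffg', hg'1, hg'2, hg'b⟩ := releg hm hiffg
          (R := ({x} : Finset ℕ)) (R' := C₁)
          (fun h => hxC₁ (Finset.singleton_subset_iff.mp h)) hC₁x
          (fun c hc1 hc2 => fsub_ssub_trans (Finset.singleton_subset_iff.mpr
            (Finset.mem_insert_self x C)) (hgb c hc1 hc2).1)
          (fun c hc1 hc2 => (hgb c hc1 hc2).2.1)
        have hGP : GoodP P F x C₁ := ⟨hC₁F, hxC₁, m₁, m₂, hm, g', hiffg', hg'1, hg'2,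
          fun c hc1 hc2 => by rw [hg'b c hc1 hc2]; exact (hgb c hc1 hc2).2.2⟩
        have hmem' : C₁ ∈ F.filter (fun C' => GoodP P F x C') :=
          Finset.mem_filter.mpr ⟨hC₁F, hGP⟩
        have hltc : C.card < C₁.card := Finset.card_lt_card
          (Finset.ssubset_iff_subset_ne.mpr ⟨h2, fun he => h1 (by rw [he])⟩)
        exact absurd (hCmax C₁ hmem') (not_le.mpr hltc)
      · -- C and C₁ incomparable: copy of P inside F, contradiction
        obtain ⟨g', hiffg', hg'1, hg'2, hg'b⟩ := releg hm hiffg (R := C) (R' := C₁) h2 h1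
          (fun c hc1 hc2 => fsub_ssub_trans hCW (hgb c hc1 hc2).1)
          (fun c hc1 hc2 => (hgb c hc1 hc2).2.1)
        refine hsat.2.1 ⟨g', inj_of_iff hiffg', fun p => ?_, hiffg'⟩
        by_cases hpm1 : p = m₁
        · rw [hpm1, hg'1]; exact hCF
        · by_cases hpm2 : p = m₂
          · rw [hpm2, hg'2]; exact hC₁F
          · rw [hg'b p hpm1 hpm2]; exact (hgb p hpm1 hpm2).2.2
    · -- the slot is a body element: the two legs of the new copy violate freeness
      push_neg at hp₁ab
      have hlt := hlegs.2.2 p₁ hp₁ab.1 hp₁ab.2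
      have hgaW : g a ⊂ W := by
        rw [← hgp₁]
        exact Finset.ssubset_iff_subset_ne.mpr
          ⟨(hiffg a p₁).mp hlt.1.le, fun h => (ne_of_lt hlt.1) (hinjg h)⟩
      have hgbW : g b ⊂ W := by
        rw [← hgp₁]
        exact Finset.ssubset_iff_subset_ne.mpr
          ⟨(hiffg b p₁).mp hlt.2.le, fun h => (ne_of_lt hlt.2) (hinjg h)⟩
      have hgaF : g a ∈ F := hgrest a (fun h => hp₁ab.1 h.symm)
      have hgbF : g b ∈ F := hgrest b (fun h => hp₁ab.2 h.symm)
      have hab1 : ¬ g a ⊆ g b := fun h => hlegs.1 ((hiffg a b).mpr h)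
      have hab2 : ¬ g b ⊆ g a := fun h => hlegs.2.1 ((hiffg b a).mpr h)
      obtain ⟨g', hiffg', hg'1, hg'2, hg'b⟩ := releg hlf hifff (R := g a) (R' := g b) hab1 hab2
        (fun c hc1 hc2 => fssub_trans hgaW (Finset.ssubset_def.mp (hfb c hc1 hc2)).1)
        (fun c hc1 hc2 => fssub_trans hgbW (Finset.ssubset_def.mp (hfb c hc1 hc2)).1)
      refine hsat.2.1 ⟨g', inj_of_iff hiffg', fun p => ?_, hiffg'⟩
      by_cases hpl1 : p = l₁
      · rw [hpl1, hg'1]; exact hgaF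
      · by_cases hpl2 : p = l₂
        · rw [hpl2, hg'2]; exact hgbF
        · rw [hg'b p hpl1 hpl2]; exact hfbody p hpl1 hpl2

/-- A saturated, non-full family contains an incomparable pair. -/
private lemma pair_of_sat [Fintype P] (hlegs : IsLegs P a b)
    (hbody : ∃ c : P, c ≠ a ∧ c ≠ b) (hnomax : ¬ ∃ m : P, ∀ p : P, p ≠ m → p < m)
    (hsat : IsIndPSaturated n P F) {G₀ : Finset ℕ} (hG₀sub : G₀ ⊆ Finset.Icc 1 n)
    (hG₀ : G₀ ∉ F) :
    ∃ U ∈ F, ∃ U' ∈ F, ¬ U ⊆ U' ∧ ¬ U' ⊆ U := by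
  obtain ⟨c₁, c₂, hc₁, hc₂, h12, h21⟩ := body_pair hlegs hbody hnomax
  obtain ⟨g, hiffg, p₀, hgp₀, hgrest⟩ := slot_of_insert hsat.2.1 (hsat.2.2 G₀ hG₀sub hG₀)
  by_cases hpab : p₀ = a ∨ p₀ = b
  · refine ⟨g c₁, hgrest c₁ ?_, g c₂, hgrest c₂ ?_, ?_, ?_⟩
    · rcases hpab with h | h
      · exact fun he => hc₁.1 (he.trans h)
      · exact fun he => hc₁.2 (he.trans h)
    · rcases hpab with h | h
      · exact fun he => hc₂.1 (he.trans h)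
      · exact fun he => hc₂.2 (he.trans h)
    · exact fun h => h12 ((hiffg c₁ c₂).mpr h)
    · exact fun h => h21 ((hiffg c₂ c₁).mpr h)
  · push_neg at hpab
    refine ⟨g a, hgrest a (fun h => hpab.1 h.symm), g b, hgrest b (fun h => hpab.2 h.symm),
      fun h => hlegs.1 ((hiffg a b).mpr h), fun h => hlegs.2.1 ((hiffg b a).mpr h)⟩

end Edge
section Final

open scoped Classical

/-- The abstract counting lemma: a family over ground set `γ` containing `∅`, `γ`,
an edge in every direction, and an incomparable pair has at least `|γ| + 2` members. -/
private lemma final_lemma : ∀ (N : ℕ) (γ : Finset ℕ) (V : Finset (Finset ℕ)),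
    γ.card ≤ N →
    (∀ A ∈ V, A ⊆ γ) → (∅ : Finset ℕ) ∈ V → γ ∈ V →
    (∀ x ∈ γ, ∃ A ∈ V, x ∉ A ∧ insert x A ∈ V) →
    (∃ U ∈ V, ∃ U' ∈ V, ¬ U ⊆ U' ∧ ¬ U' ⊆ U) →
    γ.card + 2 ≤ V.card := by
  intro N
  induction N with
  | zero =>
    intro γ V hcard hsub _ _ _ hpair
    obtain ⟨U, hU, U', hU', h1, _⟩ := hpair
    have hγ0 : γ = ∅ := Finset.card_eq_zero.mp (Nat.le_zero.mp hcard)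
    have : U = ∅ := Finset.subset_empty.mp (hγ0 ▸ hsub U hU)
    exact absurd (this ▸ Finset.empty_subset U') h1
  | succ N ih =>
    intro γ V hcard hsub hEm hγ hedge hpair
    by_cases hsmall : γ.card ≤ N
    · exact ih γ V hsmall hsub hEm hγ hedge hpair
    push_neg at hsmall
    obtain ⟨U₁, hU₁, U₂, hU₂, hUU1, hUU2⟩ := hpair
    by_cases hone : γ.card ≤ 1
    · exfalso
      rcases Finset.eq_empty_or_nonempty U₁ with h | h
      · exact hUU1 (h ▸ Finset.empty_subset U₂)
      · have h1le : 1 ≤ U₁.card := Finset.card_pos.mpr h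
        have hcc : γ.card ≤ U₁.card := by omega
        have : U₁ = γ := Finset.eq_of_subset_of_card_le (hsub U₁ hU₁) hcc
        exact hUU2 (this ▸ hsub U₂ hU₂)
    push_neg at hone
    by_cases hex : ∃ U ∈ V, ∃ U' ∈ V, (¬ U ⊆ U' ∧ ¬ U' ⊆ U) ∧
        ((U ∪ U' ≠ γ) ∨ (U ∩ U').Nonempty)
    · -- PROJECTION CASE
      obtain ⟨U, hU, U', hU', ⟨hI1, hI2⟩, hor⟩ := hex
      obtain ⟨x, hxγ, hxcase⟩ : ∃ x ∈ γ, (x ∈ U ∧ x ∈ U') ∨ (x ∉ U ∧ x ∉ U') := by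
        rcases hor with h | h
        · have hsubγ : U ∪ U' ⊆ γ := Finset.union_subset (hsub U hU) (hsub U' hU')
          obtain ⟨x, hxγ, hxnot⟩ := Finset.exists_of_ssubset
            (Finset.ssubset_iff_subset_ne.mpr ⟨hsubγ, h⟩)
          exact ⟨x, hxγ, Or.inr (by simpa [Finset.mem_union, not_or] using hxnot)⟩
        · obtain ⟨x, hx⟩ := h
          have hx' := Finset.mem_inter.mp hx
          exact ⟨x, (hsub U hU) hx'.1, Or.inl hx'⟩
      set γ' := γ.erase x with hγ'def
      have hγ'card : γ'.card + 1 = γ.card := by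
        rw [hγ'def, Finset.card_erase_of_mem hxγ]
        omega
      set V₀ := V.filter (fun A => x ∉ A) with hV₀def
      set V₁pre := V.filter (fun A => x ∈ A) with hV₁predef
      set V₁ := V₁pre.image (fun A => A.erase x) with hV₁def
      have hsplit : V₁pre.card + V₀.card = V.card := by
        rw [hV₁predef, hV₀def]
        exact Finset.card_filter_add_card_filter_not (fun A => x ∈ A)
      have hV₁card : V₁.card = V₁pre.card := by
        rw [hV₁def]
        apply Finset.card_image_of_injOn
        intro A hA B hB hAB
        have hxA : x ∈ A := (Finset.mem_filter.mp hA).2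
        have hxB : x ∈ B := (Finset.mem_filter.mp hB).2
        have hAB' : A.erase x = B.erase x := hAB
        rw [← Finset.insert_erase hxA, ← Finset.insert_erase hxB, hAB']
      set W := V₀ ∪ V₁ with hWdef
      have hWcard : W.card + (V₀ ∩ V₁).card = V₀.card + V₁.card :=
        Finset.card_union_add_card_inter V₀ V₁
      obtain ⟨Ax, hAxV, hxAx, hinsAx⟩ := hedge x hxγ
      have hAxmem : Ax ∈ V₀ ∩ V₁ := by
        refine Finset.mem_inter.mpr ⟨Finset.mem_filter.mpr ⟨hAxV, hxAx⟩, ?_⟩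
        rw [hV₁def]
        exact Finset.mem_image.mpr ⟨insert x Ax,
          Finset.mem_filter.mpr ⟨hinsAx, Finset.mem_insert_self x Ax⟩,
          Finset.erase_insert hxAx⟩
      have hinter1 : 1 ≤ (V₀ ∩ V₁).card := Finset.card_pos.mpr ⟨Ax, hAxmem⟩
      have hWsub : ∀ A ∈ W, A ⊆ γ' := by
        intro A hA
        rcases Finset.mem_union.mp hA with h | h
        · have h' := Finset.mem_filter.mp h
          exact Finset.subset_erase.mpr ⟨hsub A h'.1, h'.2⟩
        · rw [hV₁def] at h
          obtain ⟨B, hB, rfl⟩ := Finset.mem_image.mp h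
          exact Finset.erase_subset_erase x (hsub B (Finset.mem_filter.mp hB).1)
      have hEmW : (∅ : Finset ℕ) ∈ W :=
        Finset.mem_union_left _ (Finset.mem_filter.mpr ⟨hEm, Finset.notMem_empty x⟩)
      have hγ'W : γ' ∈ W := by
        refine Finset.mem_union_right _ ?_
        rw [hV₁def]
        exact Finset.mem_image.mpr ⟨γ, Finset.mem_filter.mpr ⟨hγ, hxγ⟩, rfl⟩
      have hedgeW : ∀ y ∈ γ', ∃ A ∈ W, y ∉ A ∧ insert y A ∈ W := by
        intro y hy
        have hyγ : y ∈ γ := Finset.mem_of_mem_erase hy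
        have hyx : y ≠ x := Finset.ne_of_mem_erase hy
        obtain ⟨A, hAV, hyA, hins⟩ := hedge y hyγ
        by_cases hxA : x ∈ A
        · refine ⟨A.erase x, Finset.mem_union_right _ ?_,
            fun hc => hyA (Finset.mem_of_mem_erase hc), ?_⟩
          · rw [hV₁def]
            exact Finset.mem_image.mpr ⟨A, Finset.mem_filter.mpr ⟨hAV, hxA⟩, rfl⟩
          · have heq : insert y (A.erase x) = (insert y A).erase x :=
              (Finset.erase_insert_of_ne hyx).symm
            rw [heq]
            refine Finset.mem_union_right _ ?_
            rw [hV₁def]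
            exact Finset.mem_image.mpr ⟨insert y A,
              Finset.mem_filter.mpr ⟨hins, Finset.mem_insert_of_mem hxA⟩, rfl⟩
        · refine ⟨A, Finset.mem_union_left _ (Finset.mem_filter.mpr ⟨hAV, hxA⟩), hyA,
            Finset.mem_union_left _ (Finset.mem_filter.mpr ⟨hins, ?_⟩)⟩
          intro hc
          rcases Finset.mem_insert.mp hc with h | h
          · exact hyx h.symm
          · exact hxA h
      have hpairW : ∃ Uw ∈ W, ∃ Uw' ∈ W, ¬ Uw ⊆ Uw' ∧ ¬ Uw' ⊆ Uw := by
        rcases hxcase with ⟨hxU, hxU'⟩ | ⟨hxU, hxU'⟩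
        · refine ⟨U.erase x, Finset.mem_union_right _ ?_, U'.erase x,
            Finset.mem_union_right _ ?_, ?_, ?_⟩
          · rw [hV₁def]
            exact Finset.mem_image.mpr ⟨U, Finset.mem_filter.mpr ⟨hU, hxU⟩, rfl⟩
          · rw [hV₁def]
            exact Finset.mem_image.mpr ⟨U', Finset.mem_filter.mpr ⟨hU', hxU'⟩, rfl⟩
          · intro h
            refine hI1 ?_
            rw [← Finset.insert_erase hxU, ← Finset.insert_erase hxU']
            exact Finset.insert_subset_insert x h
          · intro h
            refine hI2 ?_
            rw [← Finset.insert_erase hxU, ← Finset.insert_erase hxU']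
            exact Finset.insert_subset_insert x h
        · exact ⟨U, Finset.mem_union_left _ (Finset.mem_filter.mpr ⟨hU, hxU⟩), U',
            Finset.mem_union_left _ (Finset.mem_filter.mpr ⟨hU', hxU'⟩), hI1, hI2⟩
      have hIH := ih γ' W (by omega) hWsub hEmW hγ'W hedgeW hpairW
      omega
    · -- ALL INCOMPARABLE PAIRS PARTITION γ
      push_neg at hex
      have hall : ∀ U ∈ V, ∀ U' ∈ V, ¬ U ⊆ U' → ¬ U' ⊆ U → U ∪ U' = γ ∧ U ∩ U' = ∅ := by
        intro U hU U' hU' h1 h2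
        obtain ⟨hc1, hc2⟩ := hex U hU U' hU' ⟨h1, h2⟩
        exact ⟨hc1, hc2⟩
      by_cases htwo : γ.card ≤ 2
      · -- γ.card = 2 : the four sets ∅, U₁, U₂, γ are distinct
        have h2 : γ.card = 2 := by omega
        have hU₁ne : U₁ ≠ ∅ := fun h => hUU1 (h ▸ Finset.empty_subset U₂)
        have hU₂ne : U₂ ≠ ∅ := fun h => hUU2 (h ▸ Finset.empty_subset U₁)
        have hU₁γ : U₁ ≠ γ := fun h => hUU2 (h ▸ hsub U₂ hU₂)
        have hU₂γ : U₂ ≠ γ := fun h => hUU1 (h ▸ hsub U₁ hU₁)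
        have hEmg : (∅ : Finset ℕ) ≠ γ := by
          intro h
          rw [← h] at h2
          simp at h2
        have hU₁U₂ : U₁ ≠ U₂ := fun h => hUU1 (h ▸ Finset.Subset.refl U₂)
        have hquad : ({∅, U₁, U₂, γ} : Finset (Finset ℕ)) ⊆ V := by
          intro A hA
          simp only [Finset.mem_insert, Finset.mem_singleton] at hA
          rcases hA with rfl | rfl | rfl | rfl <;> assumption
        have hc4 : ({∅, U₁, U₂, γ} : Finset (Finset ℕ)).card = 4 := by
          rw [Finset.card_insert_of_notMem (by simp [hU₁ne.symm, hU₂ne.symm, hEmg]),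
            Finset.card_insert_of_notMem (by simp [hU₁U₂, hU₁γ]),
            Finset.card_insert_of_notMem (by simp [hU₂γ]), Finset.card_singleton]
        have := Finset.card_le_card hquad
        omega
      · push_neg at htwo
        -- n ≥ 3 : chain structure
        set A_ : ℕ → Finset ℕ := fun y => if hy : y ∈ γ then (hedge y hy).choose else ∅
          with hA_def
        have hA_spec : ∀ y, ∀ hy : y ∈ γ, A_ y ∈ V ∧ y ∉ A_ y ∧ insert y (A_ y) ∈ V := by
          intro y hy
          simp only [hA_def, dif_pos hy]
          exact (hedge y hy).choose_spec
        have hinjA : Set.InjOn A_ γ := by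
          intro y hy y' hy' hAA
          by_contra hne
          have h1 : insert y (A_ y) ∈ V := (hA_spec y hy).2.2
          have h2 : insert y' (A_ y') ∈ V := (hA_spec y' hy').2.2
          have hyA : y ∉ A_ y := (hA_spec y hy).2.1
          have hy'A' : y' ∉ A_ y' := (hA_spec y' hy').2.1
          have hni1 : ¬ insert y (A_ y) ⊆ insert y' (A_ y') := by
            intro h
            have hmem := h (Finset.mem_insert_self y _)
            rcases Finset.mem_insert.mp hmem with h' | h'
            · exact hne h'
            · rw [← hAA] at h'
              exact hyA h'
          have hni2 : ¬ insert y' (A_ y') ⊆ insert y (A_ y) := by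
            intro h
            have hmem := h (Finset.mem_insert_self y' _)
            rcases Finset.mem_insert.mp hmem with h' | h'
            · exact hne h'.symm
            · rw [hAA] at h'
              exact hy'A' h'
          obtain ⟨hcup, hcap⟩ := hall _ h1 _ h2 hni1 hni2
          have hAyEm : A_ y = ∅ := by
            have hsub1 : A_ y ⊆ insert y (A_ y) := Finset.subset_insert _ _
            have hsub2 : A_ y ⊆ insert y' (A_ y') := by
              rw [← hAA]
              exact Finset.subset_insert _ _
            have hsub3 := Finset.subset_inter hsub1 hsub2
            rw [hcap] at hsub3
            exact Finset.subset_empty.mp hsub3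
          have hγ2 : γ.card ≤ 2 := by
            have hrw : γ = insert y (A_ y) ∪ insert y' (A_ y') := hcup.symm
            rw [hrw, hAyEm, ← hAA, hAyEm]
            exact le_trans (Finset.card_union_le _ _) (by simp)
          omega
        set Φ := γ.image A_ with hΦdef
        have hΦcard : Φ.card = γ.card := Finset.card_image_of_injOn hinjA
        have hΦV : Φ ⊆ V := by
          intro A hA
          rw [hΦdef] at hA
          obtain ⟨y, hy, rfl⟩ := Finset.mem_image.mp hA
          exact (hA_spec y hy).1
        have hγΦ : γ ∉ Φ := by
          intro h
          rw [hΦdef] at h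
          obtain ⟨y, hy, hyγ⟩ := Finset.mem_image.mp h
          exact (hA_spec y hy).2.1 (hyγ.symm ▸ hy)
        have hsubins : insert γ Φ ⊆ V := Finset.insert_subset hγ hΦV
        have hV1 : γ.card + 1 ≤ V.card := by
          have := Finset.card_le_card hsubins
          rw [Finset.card_insert_of_notMem hγΦ, hΦcard] at this
          omega
        by_cases hdone : γ.card + 2 ≤ V.card
        · exact hdone
        push_neg at hdone
        have hVeq : insert γ Φ = V := Finset.eq_of_subset_of_card_le hsubins (by
          rw [Finset.card_insert_of_notMem hγΦ, hΦcard]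
          omega)
        have hsucc : ∀ B ∈ V, B ≠ γ → ∃ y, y ∈ γ ∧ y ∉ B ∧ insert y B ∈ V := by
          intro B hB hBγ
          rw [← hVeq] at hB
          rcases Finset.mem_insert.mp hB with h | h
          · exact absurd h hBγ
          · rw [hΦdef] at h
            obtain ⟨y, hy, rfl⟩ := Finset.mem_image.mp h
            exact ⟨y, hy, (hA_spec y hy).2.1, (hA_spec y hy).2.2⟩
        have hVcard : V.card = γ.card + 1 := by omega
        have hsize : ∀ k, k ≤ γ.card → ∃ B ∈ V, B.card = k := by
          intro k
          induction k with
          | zero => exact fun _ => ⟨∅, hEm, Finset.card_empty⟩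
          | succ k ihk =>
            intro hk
            obtain ⟨B, hB, hBc⟩ := ihk (by omega)
            have hBγ : B ≠ γ := by
              intro h
              rw [h] at hBc
              omega
            obtain ⟨y, hyγ, hyB, hins⟩ := hsucc B hB hBγ
            exact ⟨insert y B, hins, by rw [Finset.card_insert_of_notMem hyB, hBc]⟩
        have hcinj : Set.InjOn Finset.card (V : Set (Finset ℕ)) := by
          apply Finset.injOn_of_card_image_eq
          have h1 : (V.image Finset.card).card ≤ V.card := Finset.card_image_le
          have hrange : Finset.range (γ.card + 1) ⊆ V.image Finset.card := by
            intro k hk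
            obtain ⟨B, hB, hBc⟩ := hsize k (Nat.lt_succ_iff.mp (Finset.mem_range.mp hk))
            exact Finset.mem_image.mpr ⟨B, hB, hBc⟩
          have h2 : γ.card + 1 ≤ (V.image Finset.card).card := by
            calc γ.card + 1 = (Finset.range (γ.card + 1)).card := (Finset.card_range _).symm
              _ ≤ (V.image Finset.card).card := Finset.card_le_card hrange
          omega
        have hmono : ∀ d : ℕ, ∀ B, B ∈ V → ∀ B', B' ∈ V → B.card + d = B'.card → B ⊆ B' := by
          intro d
          induction d with
          | zero =>
            intro B hB B' hB' hc
            have heq : B = B' := hcinj (Finset.mem_coe.mpr hB) (Finset.mem_coe.mpr hB')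
              (by omega)
            rw [heq]
          | succ d ihd =>
            intro B hB B' hB' hc
            have hB'γ : B'.card ≤ γ.card := Finset.card_le_card (hsub B' hB')
            have hBγ : B ≠ γ := by
              intro h
              rw [h] at hc
              omega
            obtain ⟨y, hyγ, hyB, hins⟩ := hsucc B hB hBγ
            have hsub' : insert y B ⊆ B' := ihd (insert y B) hins B' hB'
              (by rw [Finset.card_insert_of_notMem hyB]; omega)
            exact (Finset.subset_insert y B).trans hsub'
        exfalso
        rcases le_total U₁.card U₂.card with h | h
        · exact hUU1 (hmono (U₂.card - U₁.card) U₁ hU₁ U₂ hU₂ (by omega))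
        · exact hUU2 (hmono (U₁.card - U₂.card) U₂ hU₂ U₁ hU₁ (by omega))

end Final
section Main

open scoped Classical

private lemma sat_exists (P : Type*) [PartialOrder P] (hP : Nonempty P) (n : ℕ) :
    ∃ F : Finset (Finset ℕ), IsIndPSaturated n P F := by
  set T := ((Finset.Icc 1 n).powerset.powerset).filter
    (fun F => ¬ ContainsIndCopy P F) with hTdef
  have hne : T.Nonempty := by
    refine ⟨∅, Finset.mem_filter.mpr ⟨Finset.empty_mem_powerset _, ?_⟩⟩
    rintro ⟨f, _, hmem, _⟩
    exact Finset.notMem_empty _ (hmem hP.some)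
  obtain ⟨F, hFmem, hFmax⟩ := Finset.exists_max_image T Finset.card hne
  have hFsub : F ⊆ (Finset.Icc 1 n).powerset :=
    Finset.mem_powerset.mp (Finset.mem_filter.mp hFmem).1
  refine ⟨F, fun A hA => Finset.mem_powerset.mp (hFsub hA),
    (Finset.mem_filter.mp hFmem).2, ?_⟩
  intro G hGsub hGF
  by_contra hno
  have hmem' : insert G F ∈ T := Finset.mem_filter.mpr
    ⟨Finset.mem_powerset.mpr (Finset.insert_subset (Finset.mem_powerset.mpr hGsub) hFsub), hno⟩
  have hle := hFmax _ hmem'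
  rw [Finset.card_insert_of_notMem hGF] at hle
  omega

end Main

/-- if `P` has legs `a, b`, a nonempty body, and no maximum
element, then `sat*(n, P) ≥ min(2^n, n + 2)`. -/
theorem stmt15 (P : Type*) [PartialOrder P] [Fintype P] (a b : P)
    (hlegs : IsLegs P a b)
    (hbody : ∃ c : P, c ≠ a ∧ c ≠ b)
    (hnomax : ¬ ∃ m : P, ∀ p : P, p ≠ m → p < m)
    (n : ℕ) : min (2^n) (n + 2) ≤ satStarP n P := by
  have hSne : {m | ∃ F : Finset (Finset ℕ), IsIndPSaturated n P F ∧ F.card = m}.Nonempty := by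
    obtain ⟨F, hF⟩ := sat_exists P ⟨a⟩ n
    exact ⟨F.card, F, hF, rfl⟩
  refine le_csInf hSne ?_
  rintro m ⟨F, hsat, rfl⟩
  have hicc : (Finset.Icc 1 n).card = n := by simp [Nat.card_Icc]
  by_cases hfull : ∀ G ∈ (Finset.Icc 1 n).powerset, G ∈ F
  · have hFsub : F ⊆ (Finset.Icc 1 n).powerset :=
      fun A hA => Finset.mem_powerset.mpr (hsat.1 A hA)
    have hFeq : F = (Finset.Icc 1 n).powerset :=
      Finset.Subset.antisymm hFsub (fun G hG => hfull G hG)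
    rw [hFeq, Finset.card_powerset, hicc]
    exact min_le_left _ _
  · push_neg at hfull
    obtain ⟨G₀, hG₀p, hG₀⟩ := hfull
    have hG₀sub : G₀ ⊆ Finset.Icc 1 n := Finset.mem_powerset.mp hG₀p
    have hpair := pair_of_sat hlegs hbody hnomax hsat hG₀sub hG₀
    have hbound := final_lemma ((Finset.Icc 1 n).card) (Finset.Icc 1 n) F (le_refl _)
      hsat.1 (empty_mem_of_sat hlegs hsat) (icc_mem_of_sat hnomax hsat)
      (fun x hx => edge_of_sat hlegs hsat hx) hpair
    rw [hicc] at hbound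
    exact le_trans (min_le_right _ _) hbound
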